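/- Let i be an irrational real number with 0 < i < 1, let q be a rational number with 19 < q < 20, let r be a rational number with 10 < r < 10 + i, let M = ([0, 5 + i/2] ∩ ℚ) ∪ (5 + i/2, ∞) regarded as an additive submonoid of the nonnegative reals, and let N = (ℤ × (M ∖ {0})) ∪ (ℕ₀ × {0}) regarded as an additive submonoid of ℤ × ℝ. Let F be a field, let R = F[X; N] be the monoid ring, let m be its maximal ideal of elements with zero constant term, and let D = R_m. Then in D the element X^{(0,10+i)} divides X^{(0,r)} · X^{(0,q−r)}, but there do not exist y, z ∈ D with y·z = X^{(0,10+i)}, y dividing X^{(0,r)}, and z dividing X^{(0,q−r)}; in particular D is not a pre-Schreier domain (hence not Bézout). -/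

import Mathlib

open scoped Classical

/-- The "constant term" homomorphism of a monoid algebra `F[X; M]`, for a monoid `M` in
which `a + b = 0` forces `a = b = 0`; it sends `a₁X^{α₁} + ⋯ + aₙX^{αₙ}` to its
coefficient at the identity `0` of `M` (see `constantTermHom_apply`). -/
noncomputable def constantTermHom (F M : Type*) [Field F] [AddCommMonoid M]
    (hM : ∀ a b : M, a + b = 0 → a = 0 ∧ b = 0) : AddMonoidAlgebra F M →ₐ[F] F :=
  AddMonoidAlgebra.lift F F M
    { toFun := fun a => if a.toAdd = 0 then 1 else 0
      map_one' := by simp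
      map_mul' := fun a b => by
        rcases em (a.toAdd = 0) with ha | ha
        · rcases em (b.toAdd = 0) with hb | hb
          · simp [ha, hb]
          · have h : a.toAdd + b.toAdd ≠ 0 := fun h => hb (hM _ _ h).2
            simp [ha, hb, toAdd_mul, h]
        · have h : a.toAdd + b.toAdd ≠ 0 := fun h => ha (hM _ _ h).1
          simp [ha, toAdd_mul, h] }

theorem constantTermHom_apply (F M : Type*) [Field F] [AddCommMonoid M]
    (hM : ∀ a b : M, a + b = 0 → a = 0 ∧ b = 0) (f : AddMonoidAlgebra F M) :
    constantTermHom F M hM f = f.coeff 0 := by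
  classical
  rw [constantTermHom, AddMonoidAlgebra.lift_apply]
  simp only [MonoidHom.coe_mk, OneHom.coe_mk, toAdd_ofAdd, smul_eq_mul, mul_ite, mul_one,
    mul_zero]
  rw [Finsupp.sum_ite_eq' f.coeff 0 (fun _ b => b)]
  split
  · rfl
  · next h => exact (Finsupp.notMem_support_iff.mp h).symm

/-- The augmentation ideal of the monoid algebra `F[X; M]`, consisting of all elements
with zero constant term (zero coefficient at the identity of `M`). -/
noncomputable def augIdeal (F M : Type*) [Field F] [AddCommMonoid M]
    (hM : ∀ a b : M, a + b = 0 → a = 0 ∧ b = 0) : Ideal (AddMonoidAlgebra F M) :=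
  RingHom.ker (constantTermHom F M hM)

theorem mem_augIdeal_iff (F M : Type*) [Field F] [AddCommMonoid M]
    (hM : ∀ a b : M, a + b = 0 → a = 0 ∧ b = 0) (f : AddMonoidAlgebra F M) :
    f ∈ augIdeal F M hM ↔ f.coeff 0 = 0 := by
  rw [augIdeal, RingHom.mem_ker, constantTermHom_apply]

/-- The augmentation ideal is a maximal ideal. -/
instance augIdeal_isMaximal (F M : Type*) [Field F] [AddCommMonoid M]
    {hM : ∀ a b : M, a + b = 0 → a = 0 ∧ b = 0} : (augIdeal F M hM).IsMaximal :=
  RingHom.ker_isMaximal_of_surjective _ (fun c =>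
    ⟨AddMonoidAlgebra.single 0 c, by simp [constantTermHom]⟩)

/-- The set `M = ([0, 5 + i/2] ∩ ℚ) ∪ (5 + i/2, ∞)` of nonnegative reals. -/
def Mcarrier (i : ℝ) : Set ℝ :=
  (Set.Icc (0 : ℝ) (5 + i / 2) ∩ Set.range ((↑) : ℚ → ℝ)) ∪ Set.Ioi (5 + i / 2)

theorem Mcarrier.nonneg {i : ℝ} (hi0 : 0 < i) {x : ℝ} (hx : x ∈ Mcarrier i) : 0 ≤ x := by
  rcases hx with ⟨⟨h1, _⟩, _⟩ | h
  · exact h1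
  · have : (0 : ℝ) < 5 + i / 2 := by linarith
    exact le_of_lt (lt_trans this h)

theorem Mcarrier.add_mem {i : ℝ} (hi0 : 0 < i) {a b : ℝ}
    (ha : a ∈ Mcarrier i) (hb : b ∈ Mcarrier i) : a + b ∈ Mcarrier i := by
  rcases ha with ⟨⟨ha1, ha2⟩, ⟨p, hp⟩⟩ | ha
  · rcases hb with ⟨⟨hb1, hb2⟩, ⟨s, hs⟩⟩ | hb
    · rcases lt_or_ge (5 + i / 2) (a + b) with h | h
      · exact Or.inr h
      · exact Or.inl ⟨⟨by linarith, h⟩, ⟨p + s, by push_cast [hp, hs]; ring⟩⟩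
    · exact Or.inr (by simp only [Set.mem_Ioi] at hb ⊢; linarith)
  · have hb0 : 0 ≤ b := Mcarrier.nonneg hi0 hb
    exact Or.inr (by simp only [Set.mem_Ioi] at ha ⊢; linarith)

/-- `M` as an additive submonoid of the reals. -/
def Msubmonoid (i : ℝ) (hi0 : 0 < i) : AddSubmonoid ℝ where
  carrier := Mcarrier i
  zero_mem' := Or.inl ⟨⟨le_refl 0, by linarith⟩, ⟨0, by norm_num⟩⟩
  add_mem' := fun ha hb => Mcarrier.add_mem hi0 ha hb

theorem Msubmonoid_pos_monoid (i : ℝ) (hi0 : 0 < i) :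
    ∀ a b : Msubmonoid i hi0, a + b = 0 → a = 0 ∧ b = 0 := fun a b h => by
  have hs : (a : ℝ) + (b : ℝ) = 0 := by
    have := congrArg Subtype.val h
    push_cast at this
    exact this
  have ha := Mcarrier.nonneg hi0 a.2
  have hb := Mcarrier.nonneg hi0 b.2
  refine ⟨Subtype.ext ?_, Subtype.ext ?_⟩ <;>
    simp only [ZeroMemClass.coe_zero] <;> linarith

/-- The set `N = (ℤ × (M \ {0})) ∪ (ℕ₀ × {0})` inside `ℤ × ℝ`. -/
def Ncarrier (i : ℝ) : Set (ℤ × ℝ) :=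
  {p | (p.2 ∈ Mcarrier i ∧ p.2 ≠ 0) ∨ (0 ≤ p.1 ∧ p.2 = 0)}

/-- `N` as an additive submonoid of `ℤ × ℝ`. -/
def Nsubmonoid (i : ℝ) (hi0 : 0 < i) : AddSubmonoid (ℤ × ℝ) where
  carrier := Ncarrier i
  zero_mem' := Or.inr ⟨le_refl 0, rfl⟩
  add_mem' := fun {a b} ha hb => by
    have hsnd : (a + b).2 = a.2 + b.2 := rfl
    have hfst : (a + b).1 = a.1 + b.1 := rfl
    rcases ha with ⟨ha1, ha2⟩ | ⟨ha1, ha2⟩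
    · rcases hb with ⟨hb1, hb2⟩ | ⟨hb1, hb2⟩
      · have hpa : 0 < a.2 := lt_of_le_of_ne (Mcarrier.nonneg hi0 ha1) (Ne.symm ha2)
        have hpb : 0 < b.2 := lt_of_le_of_ne (Mcarrier.nonneg hi0 hb1) (Ne.symm hb2)
        exact Or.inl ⟨hsnd ▸ Mcarrier.add_mem hi0 ha1 hb1,
          hsnd ▸ ne_of_gt (add_pos hpa hpb)⟩
      · exact Or.inl ⟨by rw [hsnd, hb2, add_zero]; exact ha1,
          by rw [hsnd, hb2, add_zero]; exact ha2⟩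
    · rcases hb with ⟨hb1, hb2⟩ | ⟨hb1, hb2⟩
      · exact Or.inl ⟨by rw [hsnd, ha2, zero_add]; exact hb1,
          by rw [hsnd, ha2, zero_add]; exact hb2⟩
      · exact Or.inr ⟨by rw [hfst]; omega, by rw [hsnd, ha2, hb2, add_zero]⟩

theorem Ncarrier.snd_nonneg {i : ℝ} (hi0 : 0 < i) {x : ℤ × ℝ} (hx : x ∈ Ncarrier i) :
    0 ≤ x.2 := by
  rcases hx with ⟨hx1, _⟩ | ⟨_, hx2⟩
  · exact Mcarrier.nonneg hi0 hx1
  · rw [hx2]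

theorem Nsubmonoid_pos_monoid (i : ℝ) (hi0 : 0 < i) :
    ∀ a b : Nsubmonoid i hi0, a + b = 0 → a = 0 ∧ b = 0 := fun a b h => by
  have hval : (a : ℤ × ℝ) + (b : ℤ × ℝ) = 0 := by
    have := congrArg Subtype.val h
    push_cast at this
    exact this
  have h1 : (a : ℤ × ℝ).1 + (b : ℤ × ℝ).1 = 0 := congrArg Prod.fst hval
  have h2 : (a : ℤ × ℝ).2 + (b : ℤ × ℝ).2 = 0 := congrArg Prod.snd hval
  have ka : 0 ≤ (a : ℤ × ℝ).2 := Ncarrier.snd_nonneg hi0 a.property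
  have kb : 0 ≤ (b : ℤ × ℝ).2 := Ncarrier.snd_nonneg hi0 b.property
  have ha2 : (a : ℤ × ℝ).2 = 0 := by linarith
  have hb2 : (b : ℤ × ℝ).2 = 0 := by linarith
  have ha1 : 0 ≤ (a : ℤ × ℝ).1 := by
    rcases a.property with ⟨_, h'⟩ | ⟨h', _⟩
    · exact absurd ha2 h'
    · exact h'
  have hb1 : 0 ≤ (b : ℤ × ℝ).1 := by
    rcases b.property with ⟨_, h'⟩ | ⟨h', _⟩
    · exact absurd hb2 h'
    · exact h'
  refine ⟨Subtype.ext ?_, Subtype.ext ?_⟩ <;> rw [ZeroMemClass.coe_zero] <;>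
      refine Prod.ext_iff.mpr ⟨?_, ?_⟩ <;> simp only [Prod.fst_zero, Prod.snd_zero]
  · omega
  · exact ha2
  · omega
  · exact hb2

theorem mem_N_ten_add (i : ℝ) (hi0 : 0 < i) :
    ((0 : ℤ), 10 + i) ∈ Nsubmonoid i hi0 :=
  Or.inl ⟨Or.inr (by simp only [Set.mem_Ioi]; linarith), by
    simp only; intro h; linarith⟩

theorem mem_N_r (i : ℝ) (hi0 : 0 < i) (hi1 : i < 1) (r : ℚ) (hr1 : 10 < (r : ℝ)) :
    ((0 : ℤ), (r : ℝ)) ∈ Nsubmonoid i hi0 :=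
  Or.inl ⟨Or.inr (by simp only [Set.mem_Ioi]; linarith), by
    simp only; intro h; rw [h] at hr1; linarith⟩

theorem mem_N_qr (i : ℝ) (hi0 : 0 < i) (hi1 : i < 1) (q r : ℚ) (hq1 : 19 < (q : ℝ))
    (hr2 : (r : ℝ) < 10 + i) : ((0 : ℤ), (q : ℝ) - (r : ℝ)) ∈ Nsubmonoid i hi0 :=
  Or.inl ⟨Or.inr (by simp only [Set.mem_Ioi]; linarith), by
    simp only; intro h; linarith⟩

/-- The image in `D = R_m` of the monomial `X^ν` of `R = F[X; N]`. -/
noncomputable def monoN (i : ℝ) (hi0 : 0 < i) (F : Type*) [Field F] (ν : ℤ × ℝ)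
    (hν : ν ∈ Nsubmonoid i hi0) :
    Localization.AtPrime (augIdeal F (Nsubmonoid i hi0) (Nsubmonoid_pos_monoid i hi0)) :=
  algebraMap (AddMonoidAlgebra F (Nsubmonoid i hi0))
    (Localization.AtPrime (augIdeal F (Nsubmonoid i hi0) (Nsubmonoid_pos_monoid i hi0)))
    (AddMonoidAlgebra.single (⟨ν, hν⟩ : Nsubmonoid i hi0) (1 : F))

/-! ### Auxiliary development: a lexicographic "valuation" on `F[X; N]` -/

section AuxDev

variable {i : ℝ} {F : Type*} [Field F]

/-- The injective additive "degree" map `N → ℝ ×ₗ ℤ`, `(n, x) ↦ (x, n)` with the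
lexicographic order. -/
def Dmap (i : ℝ) (hi0 : 0 < i) : Nsubmonoid i hi0 →+ Lex (ℝ × ℤ) where
  toFun ν := toLex ((ν : ℤ × ℝ).2, (ν : ℤ × ℝ).1)
  map_zero' := rfl
  map_add' _ _ := rfl

theorem Dmap_injective (hi0 : 0 < i) : Function.Injective (Dmap i hi0) := by
  intro a b h
  apply Subtype.ext
  exact Prod.ext (congrArg (fun p => (ofLex p).2) h) (congrArg (fun p => (ofLex p).1) h)

theorem lex_fst_le {s t : Lex (ℝ × ℤ)} (h : s ≤ t) : (ofLex s).1 ≤ (ofLex t).1 :=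
  Prod.Lex.monotone_fst s t h

theorem Dmap_fst (hi0 : 0 < i) (ν : Nsubmonoid i hi0) :
    (ofLex (Dmap i hi0 ν)).1 = (ν : ℤ × ℝ).2 := rfl

theorem zero_mem_Mcarrier (hi0 : 0 < i) : (0 : ℝ) ∈ Mcarrier i :=
  Or.inl ⟨⟨le_refl 0, by linarith⟩, ⟨0, by norm_num⟩⟩

theorem snd_mem_Mcarrier (hi0 : 0 < i) (ν : Nsubmonoid i hi0) :
    (ν : ℤ × ℝ).2 ∈ Mcarrier i := by
  rcases ν.property with ⟨h1, _⟩ | ⟨_, h2⟩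
  · exact h1
  · rw [h2]; exact zero_mem_Mcarrier hi0

/-- The minimum of the degrees of the support of a nonzero element of `F[X; N]`. -/
noncomputable def theta (hi0 : 0 < i)
    (f : AddMonoidAlgebra F (Nsubmonoid i hi0)) (hf : f ≠ 0) : Lex (ℝ × ℤ) :=
  (f.coeff.support.image (Dmap i hi0)).min'
    ((Finsupp.support_nonempty_iff.mpr (mt AddMonoidAlgebra.coeff_eq_zero.mp hf)).image _)

theorem theta_mem (hi0 : 0 < i) (f : AddMonoidAlgebra F (Nsubmonoid i hi0)) (hf : f ≠ 0) :
    ∃ ν ∈ f.coeff.support, Dmap i hi0 ν = theta hi0 f hf := by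
  have h := (f.coeff.support.image (Dmap i hi0)).min'_mem
    ((Finsupp.support_nonempty_iff.mpr (mt AddMonoidAlgebra.coeff_eq_zero.mp hf)).image _)
  rw [Finset.mem_image] at h
  obtain ⟨ν, hν, hν'⟩ := h
  exact ⟨ν, hν, hν'⟩

theorem theta_le (hi0 : 0 < i) (f : AddMonoidAlgebra F (Nsubmonoid i hi0)) (hf : f ≠ 0)
    {ν : Nsubmonoid i hi0} (hν : ν ∈ f.coeff.support) : theta hi0 f hf ≤ Dmap i hi0 ν :=
  Finset.min'_le _ _ (Finset.mem_image_of_mem _ hν)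

theorem mul_apply_min (hi0 : 0 < i) (f g : AddMonoidAlgebra F (Nsubmonoid i hi0))
    (hf : f ≠ 0) (hg : g ≠ 0) {a b : Nsubmonoid i hi0}
    (ha : a ∈ f.coeff.support) (hb : b ∈ g.coeff.support)
    (hta : Dmap i hi0 a = theta hi0 f hf) (htb : Dmap i hi0 b = theta hi0 g hg) :
    (f * g).coeff (a + b) = f.coeff a * g.coeff b := by
  classical
  rw [AddMonoidAlgebra.coeff_mul, Finsupp.sum]
  have key : ∀ x ∈ f.coeff.support, ∀ y ∈ g.coeff.support, x + y = a + b → x = a ∧ y = b := by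
    intro x hx y hy hxy
    have hDx : Dmap i hi0 a ≤ Dmap i hi0 x := hta ▸ theta_le hi0 f hf hx
    have hDy : Dmap i hi0 b ≤ Dmap i hi0 y := htb ▸ theta_le hi0 g hg hy
    have hsum : Dmap i hi0 x + Dmap i hi0 y = Dmap i hi0 a + Dmap i hi0 b := by
      rw [← map_add, ← map_add, hxy]
    have hxa : Dmap i hi0 x = Dmap i hi0 a := by
      by_contra hne
      have : Dmap i hi0 a < Dmap i hi0 x := lt_of_le_of_ne hDx (Ne.symm hne)
      have : Dmap i hi0 a + Dmap i hi0 b < Dmap i hi0 x + Dmap i hi0 y :=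
        add_lt_add_of_lt_of_le this hDy
      rw [hsum] at this
      exact lt_irrefl _ this
    have hx' : x = a := Dmap_injective hi0 hxa
    refine ⟨hx', ?_⟩
    have : Dmap i hi0 y = Dmap i hi0 b := by
      have := hsum
      rw [hxa] at this
      exact add_left_cancel this
    exact Dmap_injective hi0 this
  rw [Finset.sum_eq_single_of_mem a ha]
  · rw [Finsupp.sum, Finset.sum_eq_single_of_mem b hb]
    · rw [if_pos rfl]
    · intro y hy hyb
      rw [if_neg]
      intro hxy
      exact hyb (key a ha y hy hxy).2
  · intro x hx hxa
    rw [Finsupp.sum]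
    apply Finset.sum_eq_zero
    intro y hy
    rw [if_neg]
    intro hxy
    exact hxa (key x hx y hy hxy).1

theorem mul_ne_zero_aux (hi0 : 0 < i) (f g : AddMonoidAlgebra F (Nsubmonoid i hi0))
    (hf : f ≠ 0) (hg : g ≠ 0) : f * g ≠ 0 := by
  obtain ⟨a, ha, hta⟩ := theta_mem hi0 f hf
  obtain ⟨b, hb, htb⟩ := theta_mem hi0 g hg
  have h := mul_apply_min hi0 f g hf hg ha hb hta htb
  intro h0
  rw [h0] at h
  have := mul_ne_zero (Finsupp.mem_support_iff.mp ha) (Finsupp.mem_support_iff.mp hb)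
  exact this (by simpa using h.symm)

theorem noZeroDivisors_aux (hi0 : 0 < i) :
    NoZeroDivisors (AddMonoidAlgebra F (Nsubmonoid i hi0)) := by
  constructor
  intro f g hfg
  by_contra h
  push_neg at h
  exact mul_ne_zero_aux hi0 f g h.1 h.2 hfg

theorem theta_mul (hi0 : 0 < i) (f g : AddMonoidAlgebra F (Nsubmonoid i hi0))
    (hf : f ≠ 0) (hg : g ≠ 0) :
    theta hi0 (f * g) (mul_ne_zero_aux hi0 f g hf hg) = theta hi0 f hf + theta hi0 g hg := by
  classical
  obtain ⟨a, ha, hta⟩ := theta_mem hi0 f hf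
  obtain ⟨b, hb, htb⟩ := theta_mem hi0 g hg
  have hcoef := mul_apply_min hi0 f g hf hg ha hb hta htb
  have hmem : a + b ∈ (f * g).coeff.support := by
    rw [Finsupp.mem_support_iff, hcoef]
    exact mul_ne_zero (Finsupp.mem_support_iff.mp ha) (Finsupp.mem_support_iff.mp hb)
  apply le_antisymm
  · have := theta_le hi0 (f * g) (mul_ne_zero_aux hi0 f g hf hg) hmem
    rwa [map_add, hta, htb] at this
  · obtain ⟨c, hc, htc⟩ := theta_mem hi0 (f * g) (mul_ne_zero_aux hi0 f g hf hg)
    have hc' := AddMonoidAlgebra.support_coeff_mul_subset f g hc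
    rw [Finset.mem_add] at hc'
    obtain ⟨x, hx, y, hy, hxy⟩ := hc'
    rw [← htc, ← hxy, map_add]
    exact add_le_add (theta_le hi0 f hf hx) (theta_le hi0 g hg hy)

/-- The real-valued "order valuation": minimal second coordinate in the support. -/
noncomputable def wval (hi0 : 0 < i)
    (f : AddMonoidAlgebra F (Nsubmonoid i hi0)) (hf : f ≠ 0) : ℝ :=
  (ofLex (theta hi0 f hf)).1

theorem wval_mem (hi0 : 0 < i) (f : AddMonoidAlgebra F (Nsubmonoid i hi0)) (hf : f ≠ 0) :
    wval hi0 f hf ∈ Mcarrier i := by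
  obtain ⟨ν, _, hν⟩ := theta_mem hi0 f hf
  rw [wval, ← hν, Dmap_fst]
  exact snd_mem_Mcarrier hi0 ν

theorem wval_mul (hi0 : 0 < i) (f g : AddMonoidAlgebra F (Nsubmonoid i hi0))
    (hf : f ≠ 0) (hg : g ≠ 0) :
    wval hi0 (f * g) (mul_ne_zero_aux hi0 f g hf hg) = wval hi0 f hf + wval hi0 g hg := by
  rw [wval, wval, wval, theta_mul hi0 f g hf hg]
  rfl

theorem wval_single (hi0 : 0 < i) (ν : Nsubmonoid i hi0)
    (h : (AddMonoidAlgebra.single ν 1 : AddMonoidAlgebra F (Nsubmonoid i hi0)) ≠ 0) :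
    wval hi0 (AddMonoidAlgebra.single ν 1) h = (ν : ℤ × ℝ).2 := by
  obtain ⟨μ, hμ, hμ'⟩ := theta_mem hi0
    (AddMonoidAlgebra.single ν 1 : AddMonoidAlgebra F (Nsubmonoid i hi0)) h
  rw [AddMonoidAlgebra.coeff_single, Finsupp.support_single_ne_zero _ one_ne_zero, Finset.mem_singleton] at hμ
  subst hμ
  rw [wval, ← hμ', Dmap_fst]

theorem wval_of_const_ne_zero (hi0 : 0 < i)
    (f : AddMonoidAlgebra F (Nsubmonoid i hi0)) (hf : f ≠ 0) (h0 : f.coeff 0 ≠ 0) :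
    wval hi0 f hf = 0 := by
  have hmem : (0 : Nsubmonoid i hi0) ∈ f.coeff.support := Finsupp.mem_support_iff.mpr h0
  have hle : theta hi0 f hf ≤ Dmap i hi0 0 := theta_le hi0 f hf hmem
  rw [map_zero] at hle
  have h1 : wval hi0 f hf ≤ 0 := lex_fst_le hle
  have h2 : 0 ≤ wval hi0 f hf := Mcarrier.nonneg hi0 (wval_mem hi0 f hf)
  linarith

end AuxDev

section LocDev

variable {i : ℝ} {F : Type*} [Field F]

/-- Predicate: `α` is the valuation of the nonzero element `y` of the localization. -/
def HasW (i : ℝ) (hi0 : 0 < i) (F : Type*) [Field F]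
    (y : Localization.AtPrime (augIdeal F (Nsubmonoid i hi0) (Nsubmonoid_pos_monoid i hi0)))
    (α : ℝ) : Prop :=
  ∃ (f : AddMonoidAlgebra F (Nsubmonoid i hi0))
    (s : (augIdeal F (Nsubmonoid i hi0) (Nsubmonoid_pos_monoid i hi0)).primeCompl)
    (hf : f ≠ 0),
      y * algebraMap _ _ (s : AddMonoidAlgebra F (Nsubmonoid i hi0)) = algebraMap _ _ f ∧
      wval hi0 f hf = α

theorem primeCompl_const_ne_zero (hi0 : 0 < i)
    (s : (augIdeal F (Nsubmonoid i hi0) (Nsubmonoid_pos_monoid i hi0)).primeCompl) :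
    (s : AddMonoidAlgebra F (Nsubmonoid i hi0)).coeff 0 ≠ 0 := by
  intro h0
  exact s.property ((mem_augIdeal_iff F _ (Nsubmonoid_pos_monoid i hi0) _).mpr h0)

theorem primeCompl_ne_zero (hi0 : 0 < i)
    (s : (augIdeal F (Nsubmonoid i hi0) (Nsubmonoid_pos_monoid i hi0)).primeCompl) :
    (s : AddMonoidAlgebra F (Nsubmonoid i hi0)) ≠ 0 := by
  intro h
  exact primeCompl_const_ne_zero hi0 s (by rw [h]; rfl)

theorem algebraMap_loc_injective (hi0 : 0 < i) :
    Function.Injective (algebraMap (AddMonoidAlgebra F (Nsubmonoid i hi0))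
      (Localization.AtPrime (augIdeal F (Nsubmonoid i hi0) (Nsubmonoid_pos_monoid i hi0)))) := by
  haveI := noZeroDivisors_aux (F := F) hi0
  exact IsLocalization.injective _
    (augIdeal F (Nsubmonoid i hi0) (Nsubmonoid_pos_monoid i hi0)).primeCompl_le_nonZeroDivisors

theorem hasW_unique (hi0 : 0 < i)
    {y : Localization.AtPrime (augIdeal F (Nsubmonoid i hi0) (Nsubmonoid_pos_monoid i hi0))}
    {α β : ℝ} (hα : HasW i hi0 F y α) (hβ : HasW i hi0 F y β) : α = β := by
  obtain ⟨f, s, hf, hfs, hwf⟩ := hα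
  obtain ⟨g, t, hg, hgt, hwg⟩ := hβ
  have key : f * (t : AddMonoidAlgebra F (Nsubmonoid i hi0)) = g * s := by
    apply algebraMap_loc_injective hi0
    rw [map_mul, map_mul, ← hfs, ← hgt]
    ring
  have ht := primeCompl_ne_zero hi0 t
  have hs := primeCompl_ne_zero hi0 s
  have h1 := wval_mul hi0 f _ hf ht
  have h2 := wval_mul hi0 g _ hg hs
  have h3 : wval hi0 (f * (t : AddMonoidAlgebra F (Nsubmonoid i hi0)))
      (mul_ne_zero_aux hi0 f _ hf ht) = wval hi0 (g * (s : AddMonoidAlgebra F (Nsubmonoid i hi0)))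
      (mul_ne_zero_aux hi0 g _ hg hs) := by
    congr 1
  rw [h1, h2, wval_of_const_ne_zero hi0 _ ht (primeCompl_const_ne_zero hi0 t),
    wval_of_const_ne_zero hi0 _ hs (primeCompl_const_ne_zero hi0 s)] at h3
  rw [← hwf, ← hwg]
  linarith

theorem hasW_exists (hi0 : 0 < i)
    (y : Localization.AtPrime (augIdeal F (Nsubmonoid i hi0) (Nsubmonoid_pos_monoid i hi0)))
    (hy : y ≠ 0) : ∃ α ∈ Mcarrier i, HasW i hi0 F y α := by
  obtain ⟨⟨f, s⟩, h⟩ := IsLocalization.surj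
    (augIdeal F (Nsubmonoid i hi0) (Nsubmonoid_pos_monoid i hi0)).primeCompl y
  have hf : f ≠ 0 := by
    intro h0
    rw [h0, map_zero] at h
    have hs : algebraMap (AddMonoidAlgebra F (Nsubmonoid i hi0))
        (Localization.AtPrime (augIdeal F (Nsubmonoid i hi0)
          (Nsubmonoid_pos_monoid i hi0))) (s : AddMonoidAlgebra F (Nsubmonoid i hi0)) ≠ 0 := by
      intro h1
      exact primeCompl_ne_zero hi0 s (algebraMap_loc_injective hi0 (by rw [h1, map_zero]))
    haveI := noZeroDivisors_aux (F := F) hi0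
    haveI : IsDomain (AddMonoidAlgebra F (Nsubmonoid i hi0)) := NoZeroDivisors.to_isDomain _
    haveI : IsDomain (Localization.AtPrime (augIdeal F (Nsubmonoid i hi0)
        (Nsubmonoid_pos_monoid i hi0))) := IsLocalization.isDomain_localization
      (augIdeal F (Nsubmonoid i hi0) (Nsubmonoid_pos_monoid i hi0)).primeCompl_le_nonZeroDivisors
    rcases mul_eq_zero.mp h with h' | h'
    · exact hy h'
    · exact hs h'
  exact ⟨wval hi0 f hf, wval_mem hi0 f hf, f, s, hf, h, rfl⟩

theorem hasW_mul (hi0 : 0 < i)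
    {y z : Localization.AtPrime (augIdeal F (Nsubmonoid i hi0) (Nsubmonoid_pos_monoid i hi0))}
    {α β : ℝ} (hα : HasW i hi0 F y α) (hβ : HasW i hi0 F z β) :
    HasW i hi0 F (y * z) (α + β) := by
  obtain ⟨f, s, hf, hfs, hwf⟩ := hα
  obtain ⟨g, t, hg, hgt, hwg⟩ := hβ
  refine ⟨f * g, s * t, mul_ne_zero_aux hi0 f g hf hg, ?_, ?_⟩
  · rw [Submonoid.coe_mul, map_mul, map_mul, ← hfs, ← hgt]
    ring
  · rw [wval_mul hi0 f g hf hg, hwf, hwg]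

theorem single_ne_zero_aux (hi0 : 0 < i) (ν : Nsubmonoid i hi0) :
    (AddMonoidAlgebra.single ν 1 : AddMonoidAlgebra F (Nsubmonoid i hi0)) ≠ 0 :=
  fun h => one_ne_zero (AddMonoidAlgebra.single_eq_zero.mp h)

theorem hasW_monoN (hi0 : 0 < i) (ν : ℤ × ℝ) (hν : ν ∈ Nsubmonoid i hi0) :
    HasW i hi0 F (monoN i hi0 F ν hν) ν.2 :=
  ⟨AddMonoidAlgebra.single ⟨ν, hν⟩ 1, 1, single_ne_zero_aux hi0 _,
    by rw [OneMemClass.coe_one, map_one, mul_one]; rfl,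
    wval_single hi0 ⟨ν, hν⟩ _⟩

theorem monoN_ne_zero (hi0 : 0 < i) (ν : ℤ × ℝ) (hν : ν ∈ Nsubmonoid i hi0) :
    monoN i hi0 F ν hν ≠ 0 := fun h =>
  single_ne_zero_aux hi0 ⟨ν, hν⟩
    (algebraMap_loc_injective hi0 (h.trans (map_zero _).symm))

/-- The numeric core: no decomposition `α + β = 10 + i` with the divisibility
constraints can exist. -/
theorem numeric_core {i : ℝ} (hi : Irrational i) (hi0 : 0 < i) (hi1 : i < 1)
    {q r : ℚ} (hq1 : 19 < (q : ℝ)) (hq2 : (q : ℝ) < 20)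
    (hr1 : 10 < (r : ℝ)) (hr2 : (r : ℝ) < 10 + i)
    {α β γ δ : ℝ} (hα : α ∈ Mcarrier i) (hβ : β ∈ Mcarrier i)
    (hγ : γ ∈ Mcarrier i) (hδ : δ ∈ Mcarrier i)
    (hab : α + β = 10 + i) (hag : α + γ = (r : ℝ)) (hbd : β + δ = (q : ℝ) - (r : ℝ)) :
    False := by
  rcases hα with ⟨⟨hα0, hα5⟩, ⟨p, hp⟩⟩ | hα
  · rcases hβ with ⟨⟨hβ0, hβ5⟩, ⟨p', hp'⟩⟩ | hβ
    · -- both rational: sum is rational, but 10 + i is irrational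
      exact hi ⟨p + p' - 10, by push_cast; linarith⟩
    · -- α rational, β > 5 + i/2 : use δ
      rw [Set.mem_Ioi] at hβ
      rcases hδ with ⟨⟨hδ0, hδ5⟩, ⟨d, hd⟩⟩ | hδ
      · exact hi ⟨q - r - 10 + p - d, by push_cast; linarith⟩
      · rw [Set.mem_Ioi] at hδ
        -- δ = q - r - β > 5 + i/2 and β = 10 + i - α ≥ 10 + i - (5 + i/2)
        linarith
  · rw [Set.mem_Ioi] at hα
    rcases hβ with ⟨⟨hβ0, hβ5⟩, ⟨p', hp'⟩⟩ | hβ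
    · -- β rational, α > 5 + i/2 : use γ
      rcases hγ with ⟨⟨hγ0, hγ5⟩, ⟨c, hc⟩⟩ | hγ
      · exact hi ⟨r - c + p' - 10, by push_cast; linarith⟩
      · rw [Set.mem_Ioi] at hγ
        linarith
    · rw [Set.mem_Ioi] at hβ
      linarith

end LocDev

/-- With `i` irrational, `0 < i < 1`, `q ∈ ℚ`, `19 < q < 20`, `r ∈ ℚ`,
`10 < r < 10 + i`, `M = ([0, 5 + i/2] ∩ ℚ) ∪ (5 + i/2, ∞)`,
`N = (ℤ × (M \ {0})) ∪ (ℕ₀ × {0}) ⊆ ℤ × ℝ`, `F` a field, `R = F[X; N]`, `m` its maximal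
ideal of elements with zero constant term and `D = R_m`: in `D` the element
`X^{(0,10+i)}` divides `X^{(0,r)} · X^{(0,q-r)}`, but there are no `y, z ∈ D` with
`y·z = X^{(0,10+i)}`, `y ∣ X^{(0,r)}` and `z ∣ X^{(0,q-r)}`; in particular `D` is not a
pre-Schreier domain (hence not Bézout). -/
theorem localization_monoidAlgebra_N_not_preSchreier (i : ℝ) (hi : Irrational i)
    (hi0 : 0 < i) (hi1 : i < 1) (q : ℚ) (hq1 : 19 < (q : ℝ)) (hq2 : (q : ℝ) < 20)
    (r : ℚ) (hr1 : 10 < (r : ℝ)) (hr2 : (r : ℝ) < 10 + i) (F : Type*) [Field F] :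
    (monoN i hi0 F ((0 : ℤ), 10 + i) (mem_N_ten_add i hi0) ∣
      monoN i hi0 F ((0 : ℤ), (r : ℝ)) (mem_N_r i hi0 hi1 r hr1) *
      monoN i hi0 F ((0 : ℤ), (q : ℝ) - (r : ℝ)) (mem_N_qr i hi0 hi1 q r hq1 hr2)) ∧
    (¬∃ y z : Localization.AtPrime
        (augIdeal F (Nsubmonoid i hi0) (Nsubmonoid_pos_monoid i hi0)),
      y * z = monoN i hi0 F ((0 : ℤ), 10 + i) (mem_N_ten_add i hi0) ∧
      y ∣ monoN i hi0 F ((0 : ℤ), (r : ℝ)) (mem_N_r i hi0 hi1 r hr1) ∧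
      z ∣ monoN i hi0 F ((0 : ℤ), (q : ℝ) - (r : ℝ)) (mem_N_qr i hi0 hi1 q r hq1 hr2)) ∧
    ¬(∀ c : Localization.AtPrime
        (augIdeal F (Nsubmonoid i hi0) (Nsubmonoid_pos_monoid i hi0)), IsPrimal c) := by
  have hmem : ((0 : ℤ), (q : ℝ) - (10 + i)) ∈ Nsubmonoid i hi0 :=
    Or.inl ⟨Or.inr (by simp only [Set.mem_Ioi]; linarith), by
      simp only; intro h; linarith⟩
  have hexp : ((⟨((0 : ℤ), (r : ℝ)), mem_N_r i hi0 hi1 r hr1⟩ : Nsubmonoid i hi0) +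
      ⟨((0 : ℤ), (q : ℝ) - (r : ℝ)), mem_N_qr i hi0 hi1 q r hq1 hr2⟩) =
      (⟨((0 : ℤ), 10 + i), mem_N_ten_add i hi0⟩ +
      ⟨((0 : ℤ), (q : ℝ) - (10 + i)), hmem⟩ : Nsubmonoid i hi0) := by
    apply Subtype.ext
    show (((0 : ℤ), (r : ℝ)) + ((0 : ℤ), (q : ℝ) - (r : ℝ)) : ℤ × ℝ) =
      ((0 : ℤ), 10 + i) + ((0 : ℤ), (q : ℝ) - (10 + i))
    rw [Prod.mk_add_mk, Prod.mk_add_mk]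
    exact Prod.ext_iff.mpr ⟨rfl, by ring⟩
  have part1 : monoN i hi0 F ((0 : ℤ), 10 + i) (mem_N_ten_add i hi0) ∣
      monoN i hi0 F ((0 : ℤ), (r : ℝ)) (mem_N_r i hi0 hi1 r hr1) *
      monoN i hi0 F ((0 : ℤ), (q : ℝ) - (r : ℝ)) (mem_N_qr i hi0 hi1 q r hq1 hr2) := by
    refine ⟨monoN i hi0 F ((0 : ℤ), (q : ℝ) - (10 + i)) hmem, ?_⟩
    unfold monoN
    rw [← map_mul, ← map_mul, AddMonoidAlgebra.single_mul_single,
      AddMonoidAlgebra.single_mul_single, one_mul, hexp]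
  have part2 : ¬∃ y z : Localization.AtPrime
      (augIdeal F (Nsubmonoid i hi0) (Nsubmonoid_pos_monoid i hi0)),
      y * z = monoN i hi0 F ((0 : ℤ), 10 + i) (mem_N_ten_add i hi0) ∧
      y ∣ monoN i hi0 F ((0 : ℤ), (r : ℝ)) (mem_N_r i hi0 hi1 r hr1) ∧
      z ∣ monoN i hi0 F ((0 : ℤ), (q : ℝ) - (r : ℝ)) (mem_N_qr i hi0 hi1 q r hq1 hr2) := by
    rintro ⟨y, z, hyz, ⟨h, hh⟩, ⟨k, hk⟩⟩
    haveI := noZeroDivisors_aux (F := F) hi0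
    haveI : IsDomain (AddMonoidAlgebra F (Nsubmonoid i hi0)) := NoZeroDivisors.to_isDomain _
    haveI : IsDomain (Localization.AtPrime (augIdeal F (Nsubmonoid i hi0)
        (Nsubmonoid_pos_monoid i hi0))) := IsLocalization.isDomain_localization
      (augIdeal F (Nsubmonoid i hi0) (Nsubmonoid_pos_monoid i hi0)).primeCompl_le_nonZeroDivisors
    have hyne : y ≠ 0 := fun h0 => monoN_ne_zero hi0 _ (mem_N_ten_add i hi0)
      (by rw [← hyz, h0, zero_mul])
    have hzne : z ≠ 0 := fun h0 => monoN_ne_zero hi0 _ (mem_N_ten_add i hi0)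
      (by rw [← hyz, h0, mul_zero])
    have hhne : h ≠ 0 := fun h0 => monoN_ne_zero hi0 _ (mem_N_r i hi0 hi1 r hr1)
      (by rw [hh, h0, mul_zero])
    have hkne : k ≠ 0 := fun h0 => monoN_ne_zero hi0 _ (mem_N_qr i hi0 hi1 q r hq1 hr2)
      (by rw [hk, h0, mul_zero])
    obtain ⟨α, hαM, hαW⟩ := hasW_exists hi0 y hyne
    obtain ⟨β, hβM, hβW⟩ := hasW_exists hi0 z hzne
    obtain ⟨γ, hγM, hγW⟩ := hasW_exists hi0 h hhne
    obtain ⟨δ, hδM, hδW⟩ := hasW_exists hi0 k hkne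
    have e1 : α + β = 10 + i := by
      have h1 := hasW_mul hi0 hαW hβW
      rw [hyz] at h1
      exact hasW_unique hi0 h1 (hasW_monoN hi0 _ _)
    have e2 : α + γ = (r : ℝ) := by
      have h2 := hasW_mul hi0 hαW hγW
      rw [← hh] at h2
      exact hasW_unique hi0 h2 (hasW_monoN hi0 _ _)
    have e3 : β + δ = (q : ℝ) - (r : ℝ) := by
      have h3 := hasW_mul hi0 hβW hδW
      rw [← hk] at h3
      exact hasW_unique hi0 h3 (hasW_monoN hi0 _ _)
    exact numeric_core hi hi0 hi1 hq1 hq2 hr1 hr2 hαM hβM hγM hδM e1 e2 e3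
  refine ⟨part1, part2, fun hall => part2 ?_⟩
  obtain ⟨a₁, a₂, h1, h2, heq⟩ := hall _ part1
  exact ⟨a₁, a₂, heq.symm, h1, h2⟩
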